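/- Let d ≥ 1 and let r, t : Fin d → ℝ be nonnegative and nonincreasing. Define ψ, φ ∈ ℂ^{Fin d × Fin d} by ψ(i,j) = δ_{ij}√(r i) and φ(i,j) = δ_{ij}√(t i). Then for every Borel probability measure μ on the product of unitary groups U(d) × U(d), ∫ |⟨ψ, (U ⊗ V)·φ⟩|² dμ(U,V) ≤ (Σ_{i=1}^d √(r i · t i))². In other words, local mixed-unitary strategies cannot outperform the optimal local unitary strategy for pure state conversion. -/

import Mathlib

open Matrix MeasureTheory
open scoped Kronecker



open Finset

lemma tele (f : ℕ → ℝ) (m n : ℕ) (h : m ≤ n) :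
    ∑ k ∈ Finset.Ico m n, (f k - f (k+1)) = f m - f n := by
  induction n with
  | zero => interval_cases m; simp
  | succ n ih =>
    rcases Nat.lt_or_ge m (n+1) with hlt | hge
    · rw [Finset.sum_Ico_succ_top (by omega), ih (by omega)]; ring
    · have : m = n + 1 := by omega
      subst this; simp

lemma layer (d : ℕ) (x : Fin d → ℝ) (hx : Antitone x) (hx0 : ∀ i, 0 ≤ x i) :
    ∃ α : ℕ → ℝ, (∀ k, 0 ≤ α k) ∧
      ∀ i : Fin d, x i = ∑ k ∈ Finset.range d, if (i : ℕ) ≤ k then α k else 0 := by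
  set X : ℕ → ℝ := fun n => if h : n < d then x ⟨n, h⟩ else 0 with hX
  refine ⟨fun k => X k - X (k+1), ?_, ?_⟩
  · intro k
    simp only [hX]
    split_ifs with h1 h2 h2
    · have := hx (show (⟨k, h1⟩ : Fin d) ≤ ⟨k+1, h2⟩ by simp [Fin.le_def])
      linarith
    · simpa using hx0 ⟨k, h1⟩
    · omega
    · simp
  · intro i
    have h1 : ∑ k ∈ Finset.range d, (if (i : ℕ) ≤ k then X k - X (k+1) else 0)
        = ∑ k ∈ Finset.Ico (i : ℕ) d, (X k - X (k+1)) := by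
      rw [Finset.sum_ite, Finset.sum_const_zero, add_zero]
      apply Finset.sum_congr _ (fun _ _ => rfl)
      ext k; simp [Finset.mem_Ico]; omega
    rw [h1, tele X _ _ (le_of_lt i.isLt)]
    simp [hX, i.isLt]

lemma expand (d : ℕ) (x y : Fin d → ℝ) (α β : ℕ → ℝ)
    (hx : ∀ i : Fin d, x i = ∑ k ∈ Finset.range d, if (i : ℕ) ≤ k then α k else 0)
    (hy : ∀ j : Fin d, y j = ∑ l ∈ Finset.range d, if (j : ℕ) ≤ l then β l else 0)
    (a : Fin d → Fin d → ℝ) :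
    ∑ i, ∑ j, a i j * x i * y j
      = ∑ k ∈ Finset.range d, ∑ l ∈ Finset.range d, α k * β l *
          (∑ i ∈ Finset.univ.filter (fun i : Fin d => (i : ℕ) ≤ k),
             ∑ j ∈ Finset.univ.filter (fun j : Fin d => (j : ℕ) ≤ l), a i j) := by
  have key : ∀ k l, α k * β l *
          (∑ i ∈ Finset.univ.filter (fun i : Fin d => (i : ℕ) ≤ k),
             ∑ j ∈ Finset.univ.filter (fun j : Fin d => (j : ℕ) ≤ l), a i j)
      = ∑ i : Fin d, ∑ j : Fin d,
          a i j * (if (i : ℕ) ≤ k then α k else 0) * (if (j : ℕ) ≤ l then β l else 0) := by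
    intro k l
    rw [Finset.sum_filter]
    simp only [Finset.sum_filter, Finset.mul_sum, mul_ite, mul_zero]
    apply Finset.sum_congr rfl; intro i _
    split_ifs with h1
    · apply Finset.sum_congr rfl; intro j _
      split_ifs with h2 <;> ring
    · symm; apply Finset.sum_eq_zero; intro j _; simp [h1]
  calc ∑ i, ∑ j, a i j * x i * y j
      = ∑ i : Fin d, ∑ j : Fin d, ∑ k ∈ Finset.range d, ∑ l ∈ Finset.range d,
          a i j * (if (i : ℕ) ≤ k then α k else 0) * (if (j : ℕ) ≤ l then β l else 0) := by
        apply Finset.sum_congr rfl; intro i _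
        apply Finset.sum_congr rfl; intro j _
        rw [hx i, hy j, mul_assoc, Finset.sum_mul_sum]
        rw [Finset.mul_sum]
        apply Finset.sum_congr rfl; intro k _
        rw [Finset.mul_sum]
        apply Finset.sum_congr rfl; intro l _
        ring
    _ = ∑ i : Fin d, ∑ k ∈ Finset.range d, ∑ j : Fin d, ∑ l ∈ Finset.range d,
          a i j * (if (i : ℕ) ≤ k then α k else 0) * (if (j : ℕ) ≤ l then β l else 0) := by
        apply Finset.sum_congr rfl; intro i _
        exact Finset.sum_comm
    _ = ∑ k ∈ Finset.range d, ∑ i : Fin d, ∑ j : Fin d, ∑ l ∈ Finset.range d,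
          a i j * (if (i : ℕ) ≤ k then α k else 0) * (if (j : ℕ) ≤ l then β l else 0) := by
        exact Finset.sum_comm
    _ = ∑ k ∈ Finset.range d, ∑ i : Fin d, ∑ l ∈ Finset.range d, ∑ j : Fin d,
          a i j * (if (i : ℕ) ≤ k then α k else 0) * (if (j : ℕ) ≤ l then β l else 0) := by
        apply Finset.sum_congr rfl; intro k _
        apply Finset.sum_congr rfl; intro i _
        exact Finset.sum_comm
    _ = ∑ k ∈ Finset.range d, ∑ l ∈ Finset.range d, ∑ i : Fin d, ∑ j : Fin d,
          a i j * (if (i : ℕ) ≤ k then α k else 0) * (if (j : ℕ) ≤ l then β l else 0) := by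
        apply Finset.sum_congr rfl; intro k _
        exact Finset.sum_comm
    _ = _ := by
        apply Finset.sum_congr rfl; intro k _
        apply Finset.sum_congr rfl; intro l _
        exact (key k l).symm

lemma card_filter_le (d k : ℕ) (hk : k < d) :
    (Finset.univ.filter (fun i : Fin d => (i : ℕ) ≤ k)).card = k + 1 := by
  have : Finset.univ.filter (fun i : Fin d => (i : ℕ) ≤ k) = Finset.Iic (⟨k, hk⟩ : Fin d) := by
    ext i; simp [Fin.le_def]
  rw [this, Fin.card_Iic]

lemma subst_sum (d : ℕ) (x y : Fin d → ℝ)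
    (hx : Antitone x) (hy : Antitone y) (hx0 : ∀ i, 0 ≤ x i) (hy0 : ∀ i, 0 ≤ y i)
    (a : Fin d → Fin d → ℝ) (ha0 : ∀ i j, 0 ≤ a i j)
    (hrow : ∀ i, ∑ j, a i j ≤ 1) (hcol : ∀ j, ∑ i, a i j ≤ 1) :
    ∑ i, ∑ j, a i j * x i * y j ≤ ∑ i, x i * y i := by
  obtain ⟨α, hα0, hα⟩ := layer d x hx hx0
  obtain ⟨β, hβ0, hβ⟩ := layer d y hy hy0
  set δ : Fin d → Fin d → ℝ := fun i j => if i = j then 1 else 0 with hδ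
  have hRHS : ∑ i, x i * y i = ∑ i, ∑ j, δ i j * x i * y j := by
    apply Finset.sum_congr rfl; intro i _
    rw [Finset.sum_eq_single i]
    · simp [hδ]
    · intro j _ hj; simp [hδ, hj.symm]
    · simp
  rw [hRHS, expand d x y α β hα hβ a, expand d x y α β hα hβ δ]
  apply Finset.sum_le_sum; intro k hk
  apply Finset.sum_le_sum; intro l hl
  rw [Finset.mem_range] at hk hl
  -- compute the δ inner sum
  have hδsum : (∑ i ∈ Finset.univ.filter (fun i : Fin d => (i : ℕ) ≤ k),
      ∑ j ∈ Finset.univ.filter (fun j : Fin d => (j : ℕ) ≤ l), δ i j)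
      = ((min k l : ℕ) : ℝ) + 1 := by
    have h1 : ∀ i : Fin d, (∑ j ∈ Finset.univ.filter (fun j : Fin d => (j : ℕ) ≤ l), δ i j)
        = if (i : ℕ) ≤ l then 1 else 0 := by
      intro i
      rw [Finset.sum_filter]
      rw [Finset.sum_eq_single i]
      · simp [hδ]
      · intro j _ hj; simp [hδ, hj.symm]
      · simp
    simp only [h1]
    rw [Finset.sum_ite, Finset.sum_const_zero, add_zero, Finset.sum_const, nsmul_eq_mul, mul_one]
    have : Finset.filter (fun i : Fin d => (i : ℕ) ≤ l) (Finset.univ.filter (fun i : Fin d => (i : ℕ) ≤ k))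
        = Finset.univ.filter (fun i : Fin d => (i : ℕ) ≤ min k l) := by
      ext i; simp only [Finset.mem_filter, Finset.mem_univ, true_and]; omega
    rw [this, card_filter_le d (min k l) (by omega)]
    norm_cast
  rw [hδsum]
  have hT : (∑ i ∈ Finset.univ.filter (fun i : Fin d => (i : ℕ) ≤ k),
      ∑ j ∈ Finset.univ.filter (fun j : Fin d => (j : ℕ) ≤ l), a i j) ≤ ((min k l : ℕ) : ℝ) + 1 := by
    rcases Nat.le_or_le k l with h | h
    · have : min k l = k := by omega
      rw [this]
      calc ∑ i ∈ Finset.univ.filter (fun i : Fin d => (i : ℕ) ≤ k),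
            ∑ j ∈ Finset.univ.filter (fun j : Fin d => (j : ℕ) ≤ l), a i j
          ≤ ∑ i ∈ Finset.univ.filter (fun i : Fin d => (i : ℕ) ≤ k), (1:ℝ) := by
            apply Finset.sum_le_sum; intro i _
            calc ∑ j ∈ Finset.univ.filter (fun j : Fin d => (j : ℕ) ≤ l), a i j
                ≤ ∑ j, a i j := Finset.sum_le_sum_of_subset_of_nonneg
                    (Finset.filter_subset _ _) (fun j _ _ => ha0 i j)
              _ ≤ 1 := hrow i
        _ = ((k : ℕ) : ℝ) + 1 := by
            rw [Finset.sum_const, card_filter_le d k hk, nsmul_eq_mul, mul_one]; norm_cast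
    · have : min k l = l := by omega
      rw [this]
      calc ∑ i ∈ Finset.univ.filter (fun i : Fin d => (i : ℕ) ≤ k),
            ∑ j ∈ Finset.univ.filter (fun j : Fin d => (j : ℕ) ≤ l), a i j
          = ∑ j ∈ Finset.univ.filter (fun j : Fin d => (j : ℕ) ≤ l),
            ∑ i ∈ Finset.univ.filter (fun i : Fin d => (i : ℕ) ≤ k), a i j := Finset.sum_comm
        _ ≤ ∑ j ∈ Finset.univ.filter (fun j : Fin d => (j : ℕ) ≤ l), (1:ℝ) := by
            apply Finset.sum_le_sum; intro j _
            calc ∑ i ∈ Finset.univ.filter (fun i : Fin d => (i : ℕ) ≤ k), a i j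
                ≤ ∑ i, a i j := Finset.sum_le_sum_of_subset_of_nonneg
                    (Finset.filter_subset _ _) (fun i _ _ => ha0 i j)
              _ ≤ 1 := hcol j
        _ = ((l : ℕ) : ℝ) + 1 := by
            rw [Finset.sum_const, card_filter_le d l hl, nsmul_eq_mul, mul_one]; norm_cast
  exact mul_le_mul_of_nonneg_left hT (mul_nonneg (hα0 k) (hβ0 l))

open Matrix
open scoped Kronecker

lemma row_sq (d : ℕ) (U : Matrix.unitaryGroup (Fin d) ℂ) (i : Fin d) :
    ∑ j, (norm ((U : Matrix (Fin d) (Fin d) ℂ) i j))^2 = 1 := by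
  have h : (U : Matrix (Fin d) (Fin d) ℂ) * star (U : Matrix (Fin d) (Fin d) ℂ) = 1 :=
    Matrix.mem_unitaryGroup_iff.mp U.2
  have h2 := congrFun (congrFun (congrArg (fun M => M) h) i) i
  have h3 : (∑ j, (U : Matrix (Fin d) (Fin d) ℂ) i j *
      (starRingEnd ℂ) ((U : Matrix (Fin d) (Fin d) ℂ) i j)) = 1 := by
    have := congrArg (fun M : Matrix (Fin d) (Fin d) ℂ => M i i) h
    simpa [Matrix.mul_apply, Matrix.one_apply, Matrix.star_apply] using this
  have h4 : ((∑ j, (norm ((U : Matrix (Fin d) (Fin d) ℂ) i j))^2 : ℝ) : ℂ) = 1 := by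
    push_cast
    rw [← h3]
    apply Finset.sum_congr rfl; intro j _
    rw [Complex.mul_conj]
    norm_cast
    rw [Complex.sq_norm]
  exact_mod_cast h4

lemma col_sq (d : ℕ) (U : Matrix.unitaryGroup (Fin d) ℂ) (j : Fin d) :
    ∑ i, (norm ((U : Matrix (Fin d) (Fin d) ℂ) i j))^2 = 1 := by
  have h : star (U : Matrix (Fin d) (Fin d) ℂ) * (U : Matrix (Fin d) (Fin d) ℂ) = 1 :=
    Matrix.mem_unitaryGroup_iff'.mp U.2
  have h3 : (∑ i, (starRingEnd ℂ) ((U : Matrix (Fin d) (Fin d) ℂ) i j) *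
      (U : Matrix (Fin d) (Fin d) ℂ) i j) = 1 := by
    have := congrArg (fun M : Matrix (Fin d) (Fin d) ℂ => M j j) h
    simpa [Matrix.mul_apply, Matrix.one_apply, Matrix.star_apply] using this
  have h4 : ((∑ i, (norm ((U : Matrix (Fin d) (Fin d) ℂ) i j))^2 : ℝ) : ℂ) = 1 := by
    push_cast
    rw [← h3]
    apply Finset.sum_congr rfl; intro i _
    rw [mul_comm, Complex.mul_conj]
    norm_cast
    rw [Complex.sq_norm]
  exact_mod_cast h4

lemma cs_row (d : ℕ) (f g : Fin d → ℝ) (hf : ∀ j, 0 ≤ f j) (hg : ∀ j, 0 ≤ g j)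
    (hf1 : ∑ j, (f j)^2 = 1) (hg1 : ∑ j, (g j)^2 = 1) :
    ∑ j, f j * g j ≤ 1 := by
  have h := Finset.sum_mul_sq_le_sq_mul_sq Finset.univ f g
  rw [hf1, hg1, mul_one] at h
  have hnn : 0 ≤ ∑ j, f j * g j :=
    Finset.sum_nonneg fun j _ => mul_nonneg (hf j) (hg j)
  nlinarith

lemma sum_simp (d : ℕ) (r t : Fin d → ℝ) (U V : Matrix.unitaryGroup (Fin d) ℂ) :
    (∑ y : Fin d × Fin d,
        (starRingEnd ℂ) (if y.1 = y.2 then (Real.sqrt (r y.1) : ℂ) else 0) *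
          (((U : Matrix (Fin d) (Fin d) ℂ) ⊗ₖ (V : Matrix (Fin d) (Fin d) ℂ)) *ᵥ
            (fun z : Fin d × Fin d =>
              if z.1 = z.2 then (Real.sqrt (t z.1) : ℂ) else 0)) y)
    = ∑ i : Fin d, ∑ j : Fin d, (Real.sqrt (r i) : ℂ) *
        ((U : Matrix (Fin d) (Fin d) ℂ) i j * (V : Matrix (Fin d) (Fin d) ℂ) i j) *
        (Real.sqrt (t j) : ℂ) := by
  rw [Fintype.sum_prod_type]
  simp only [Matrix.mulVec, dotProduct, Matrix.kroneckerMap_apply,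
    Fintype.sum_prod_type]
  simp only [mul_ite, mul_zero, Finset.sum_ite_eq, Finset.mem_univ, if_true,
    apply_ite (starRingEnd ℂ), map_zero, Complex.conj_ofReal, ite_mul, zero_mul,
    Finset.sum_ite_eq', Finset.sum_ite_eq]
  apply Finset.sum_congr rfl; intro i _
  rw [Finset.mul_sum]
  apply Finset.sum_congr rfl; intro j _
  ring

lemma pointwise (d : ℕ) (r t : Fin d → ℝ)
    (hr0 : ∀ i, 0 ≤ r i) (ht0 : ∀ i, 0 ≤ t i)
    (hr : Antitone r) (ht : Antitone t)
    (U V : Matrix.unitaryGroup (Fin d) ℂ) :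
    norm (∑ y : Fin d × Fin d,
        (starRingEnd ℂ) (if y.1 = y.2 then (Real.sqrt (r y.1) : ℂ) else 0) *
          (((U : Matrix (Fin d) (Fin d) ℂ) ⊗ₖ (V : Matrix (Fin d) (Fin d) ℂ)) *ᵥ
            (fun z : Fin d × Fin d =>
              if z.1 = z.2 then (Real.sqrt (t z.1) : ℂ) else 0)) y) ^ 2
      ≤ (∑ i, Real.sqrt (r i * t i)) ^ 2 := by
  rw [sum_simp]
  set a : Fin d → Fin d → ℝ := fun i j =>
    norm ((U : Matrix (Fin d) (Fin d) ℂ) i j) *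
      norm ((V : Matrix (Fin d) (Fin d) ℂ) i j) with ha
  have habs : norm (∑ i : Fin d, ∑ j : Fin d, (Real.sqrt (r i) : ℂ) *
        ((U : Matrix (Fin d) (Fin d) ℂ) i j * (V : Matrix (Fin d) (Fin d) ℂ) i j) *
        (Real.sqrt (t j) : ℂ))
      ≤ ∑ i : Fin d, ∑ j : Fin d, a i j * Real.sqrt (r i) * Real.sqrt (t j) := by
    calc norm (∑ i : Fin d, ∑ j : Fin d, _)
        ≤ ∑ i : Fin d, norm (∑ j : Fin d, (Real.sqrt (r i) : ℂ) *
            ((U : Matrix (Fin d) (Fin d) ℂ) i j * (V : Matrix (Fin d) (Fin d) ℂ) i j) *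
            (Real.sqrt (t j) : ℂ)) := norm_sum_le _ _
      _ ≤ ∑ i : Fin d, ∑ j : Fin d, norm ((Real.sqrt (r i) : ℂ) *
            ((U : Matrix (Fin d) (Fin d) ℂ) i j * (V : Matrix (Fin d) (Fin d) ℂ) i j) *
            (Real.sqrt (t j) : ℂ)) :=
          Finset.sum_le_sum fun i _ => norm_sum_le _ _
      _ = ∑ i : Fin d, ∑ j : Fin d, a i j * Real.sqrt (r i) * Real.sqrt (t j) := by
          apply Finset.sum_congr rfl; intro i _
          apply Finset.sum_congr rfl; intro j _
          simp only [norm_mul, Complex.norm_real, Real.norm_eq_abs, ha,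
            abs_of_nonneg (Real.sqrt_nonneg _)]
          ring
  have hsub : ∑ i : Fin d, ∑ j : Fin d, a i j * Real.sqrt (r i) * Real.sqrt (t j)
      ≤ ∑ i, Real.sqrt (r i * t i) := by
    have := subst_sum d (fun i => Real.sqrt (r i)) (fun j => Real.sqrt (t j))
      (fun i j hij => Real.sqrt_le_sqrt (hr hij))
      (fun i j hij => Real.sqrt_le_sqrt (ht hij))
      (fun i => Real.sqrt_nonneg _) (fun i => Real.sqrt_nonneg _)
      a (fun i j => mul_nonneg (norm_nonneg _) (norm_nonneg _))
      (fun i => cs_row d _ _ (fun j => norm_nonneg _) (fun j => norm_nonneg _)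
        (row_sq d U i) (row_sq d V i))
      (fun j => cs_row d _ _ (fun i => norm_nonneg _) (fun i => norm_nonneg _)
        (col_sq d U j) (col_sq d V j))
    calc ∑ i : Fin d, ∑ j : Fin d, a i j * Real.sqrt (r i) * Real.sqrt (t j)
        ≤ ∑ i, Real.sqrt (r i) * Real.sqrt (t i) := this
      _ = ∑ i, Real.sqrt (r i * t i) := by
          apply Finset.sum_congr rfl; intro i _
          rw [Real.sqrt_mul (hr0 i)]
  exact pow_le_pow_left₀ (norm_nonneg _) (le_trans habs hsub) 2

/-- local mixed-unitary strategies cannot outperform the optimal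
local-unitary strategy: for every Borel probability measure `μ` on pairs of
unitaries, the average fidelity is at most `(∑ i, √(r i * t i))²`. -/
theorem stmt_2 (d : ℕ) (hd : 1 ≤ d) (r t : Fin d → ℝ)
    (hr0 : ∀ i, 0 ≤ r i) (ht0 : ∀ i, 0 ≤ t i)
    (hr : Antitone r) (ht : Antitone t)
    [MeasurableSpace (Matrix.unitaryGroup (Fin d) ℂ × Matrix.unitaryGroup (Fin d) ℂ)]
    [BorelSpace (Matrix.unitaryGroup (Fin d) ℂ × Matrix.unitaryGroup (Fin d) ℂ)]
    (μ : Measure (Matrix.unitaryGroup (Fin d) ℂ × Matrix.unitaryGroup (Fin d) ℂ))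
    [IsProbabilityMeasure μ] :
    (∫ UV : Matrix.unitaryGroup (Fin d) ℂ × Matrix.unitaryGroup (Fin d) ℂ,
      norm (∑ y : Fin d × Fin d,
        (starRingEnd ℂ) (if y.1 = y.2 then (Real.sqrt (r y.1) : ℂ) else 0) *
          (((UV.1 : Matrix (Fin d) (Fin d) ℂ) ⊗ₖ (UV.2 : Matrix (Fin d) (Fin d) ℂ)) *ᵥ
            (fun z : Fin d × Fin d =>
              if z.1 = z.2 then (Real.sqrt (t z.1) : ℂ) else 0)) y) ^ 2 ∂μ)
    ≤ (∑ i, Real.sqrt (r i * t i)) ^ 2 := by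
  set f : Matrix.unitaryGroup (Fin d) ℂ × Matrix.unitaryGroup (Fin d) ℂ → ℝ := fun UV =>
      norm (∑ y : Fin d × Fin d,
        (starRingEnd ℂ) (if y.1 = y.2 then (Real.sqrt (r y.1) : ℂ) else 0) *
          (((UV.1 : Matrix (Fin d) (Fin d) ℂ) ⊗ₖ (UV.2 : Matrix (Fin d) (Fin d) ℂ)) *ᵥ
            (fun z : Fin d × Fin d =>
              if z.1 = z.2 then (Real.sqrt (t z.1) : ℂ) else 0)) y) ^ 2 with hf
  have hbound : ∀ UV, f UV ≤ (∑ i, Real.sqrt (r i * t i)) ^ 2 := fun UV =>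
    pointwise d r t hr0 ht0 hr ht UV.1 UV.2
  by_cases hI : Integrable f μ
  · calc ∫ UV, f UV ∂μ ≤ ∫ _, (∑ i, Real.sqrt (r i * t i)) ^ 2 ∂μ :=
        integral_mono hI (integrable_const _) hbound
      _ = (∑ i, Real.sqrt (r i * t i)) ^ 2 := by
        rw [integral_const]; simp
  · rw [integral_undef hI]
    positivity
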